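/- arXiv:1611.04638 — 3 statements merged into one kernel-verified Lean document; each statement's English description precedes it below -/
import Mathlib

section
/- (Lemma 1, selection of γ^s and γ^w.) Let σ > 0 and ε ∈ (0, 1/2), and fix γ with ε < γ < 1 − ε. Let (λ_n)_{n≥1} be positive reals with √n·λ_n → 0 and n·λ_n → ∞ as n → ∞. Suppose that for every sufficiently large n there is ν_n > 0 satisfying Φ(√n(ν_n − √λ_n)/σ) + Φ(√n(−ν_n − √λ_n)/σ) = γ. Then ν_n/√λ_n → 1 as n → ∞. -/
open MeasureTheory ProbabilityTheory Filter

/-- The standard normal cumulative distribution function. -/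
noncomputable def Phi (x : ℝ) : ℝ := (gaussianReal 0 1 (Set.Iic x)).toReal

lemma Phi_eq_cdf (x : ℝ) : Phi x = ProbabilityTheory.cdf (gaussianReal 0 1) x := by
  rw [Phi, ProbabilityTheory.cdf_eq_real, measureReal_def]

lemma sqrt_tendsto_atTop' : Filter.Tendsto Real.sqrt Filter.atTop Filter.atTop := by
  apply Filter.tendsto_atTop_atTop_of_monotone (fun _ _ h => Real.sqrt_le_sqrt h)
  intro b
  exact ⟨b ^ 2, by rw [Real.sqrt_sq_eq_abs]; exact le_abs_self b⟩

lemma Phi_mono : Monotone Phi := by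
  intro a b hab
  rw [Phi_eq_cdf, Phi_eq_cdf]
  exact (ProbabilityTheory.cdf (gaussianReal 0 1)).mono hab

lemma Phi_tendsto_atBot : Tendsto Phi atBot (nhds 0) := by
  simp only [funext Phi_eq_cdf]
  exact ProbabilityTheory.tendsto_cdf_atBot _

lemma Phi_tendsto_atTop : Tendsto Phi atTop (nhds 1) := by
  simp only [funext Phi_eq_cdf]
  exact ProbabilityTheory.tendsto_cdf_atTop _

/-- Lemma 1: if √n·λ_n → 0 and n·λ_n → ∞, and ν_n > 0 eventually solves
Φ(√n(ν_n − √λ_n)/σ) + Φ(√n(−ν_n − √λ_n)/σ) = γ with ε < γ < 1 − ε, then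
ν_n/√λ_n → 1. -/
theorem weak_signal_scale (σ ε γ : ℝ) (hσ : 0 < σ) (hε : 0 < ε) (hε' : ε < 1/2)
    (hγ1 : ε < γ) (hγ2 : γ < 1 - ε)
    (lam : ℕ → ℝ) (hlam : ∀ n, 0 < lam n)
    (h1 : Tendsto (fun n : ℕ => Real.sqrt n * lam n) atTop (nhds 0))
    (h2 : Tendsto (fun n : ℕ => (n : ℝ) * lam n) atTop atTop)
    (ν : ℕ → ℝ)
    (hν : ∀ᶠ n : ℕ in atTop, 0 < ν n ∧
      Phi (Real.sqrt n * (ν n - Real.sqrt (lam n)) / σ) +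
        Phi (Real.sqrt n * (-(ν n) - Real.sqrt (lam n)) / σ) = γ) :
    Tendsto (fun n : ℕ => ν n / Real.sqrt (lam n)) atTop (nhds 1) := by
  -- a n = √(n * lam n) → ∞
  set a : ℕ → ℝ := fun n => Real.sqrt n * Real.sqrt (lam n) with ha_def
  have ha : Tendsto a atTop atTop := by
    have : a = fun n : ℕ => Real.sqrt ((n : ℝ) * lam n) := by
      funext n
      rw [Real.sqrt_mul (Nat.cast_nonneg n)]
    rw [this]
    exact sqrt_tendsto_atTop'.comp h2
  -- t n : the first argument
  set t : ℕ → ℝ := fun n => Real.sqrt n * (ν n - Real.sqrt (lam n)) / σ with ht_def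
  set s : ℕ → ℝ := fun n => Real.sqrt n * (-(ν n) - Real.sqrt (lam n)) / σ with hs_def
  -- s n → -∞
  have hs_le : ∀ᶠ n in atTop, s n ≤ -(a n) / σ := by
    filter_upwards [hν] with n hn
    have h0 : (0:ℝ) ≤ Real.sqrt n := Real.sqrt_nonneg _
    have hkey : Real.sqrt n * (-(ν n) - Real.sqrt (lam n)) ≤ -(Real.sqrt n * Real.sqrt (lam n)) := by
      nlinarith [hn.1, Real.sqrt_nonneg (lam n)]
    simp only [hs_def, ha_def]
    gcongr
  have hs_bot : Tendsto s atTop atBot := by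
    have hb : Tendsto (fun n => -(a n) / σ) atTop atBot := by
      apply Tendsto.atBot_div_const hσ
      exact tendsto_neg_atTop_atBot.comp ha
    exact tendsto_atBot_mono' atTop hs_le hb
  have hPhis : Tendsto (fun n => Phi (s n)) atTop (nhds 0) :=
    Phi_tendsto_atBot.comp hs_bot
  -- eventually Phi (s n) ≤ ε/2
  have hsmall : ∀ᶠ n in atTop, Phi (s n) ≤ ε / 2 := by
    have := hPhis.eventually_le_const (by linarith : (0:ℝ) < ε/2)
    filter_upwards [this] with n hn using hn
  -- bounds on t
  obtain ⟨A, hA⟩ : ∃ A, Phi A < ε / 2 := by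
    have := Phi_tendsto_atBot.eventually_lt_const (by linarith : (0:ℝ) < ε/2)
    exact this.exists
  obtain ⟨B, hB⟩ : ∃ B, 1 - ε < Phi B := by
    have := Phi_tendsto_atTop.eventually_const_lt (by linarith : 1 - ε < 1)
    exact this.exists
  have htbound : ∀ᶠ n in atTop, A ≤ t n ∧ t n ≤ B := by
    filter_upwards [hν, hsmall] with n hn hsn
    have heq : Phi (t n) + Phi (s n) = γ := hn.2
    have hPhi_s_nonneg : 0 ≤ Phi (s n) := ENNReal.toReal_nonneg
    constructor
    · by_contra h
      push_neg at h
      have : Phi (t n) ≤ Phi A := Phi_mono h.le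
      linarith
    · by_contra h
      push_neg at h
      have : Phi B ≤ Phi (t n) := Phi_mono h.le
      linarith
  -- ν n / √(lam n) - 1 = σ * t n / a n
  set M := max |A| |B| with hM_def
  have hdiff : Tendsto (fun n => ν n / Real.sqrt (lam n) - 1) atTop (nhds 0) := by
    have hc : Tendsto (fun n => σ * M / a n) atTop (nhds 0) :=
      Tendsto.div_atTop tendsto_const_nhds ha
    have hc' : Tendsto (fun n => -(σ * M / a n)) atTop (nhds 0) := by
      simpa using hc.neg
    apply tendsto_of_tendsto_of_tendsto_of_le_of_le' hc' hc
    · filter_upwards [htbound, ha.eventually_gt_atTop 0] with n hb hapos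
      simp only [ha_def] at hapos ⊢
      have hsl : 0 < Real.sqrt (lam n) := Real.sqrt_pos.2 (hlam n)
      have hsn : 0 < Real.sqrt (n : ℝ) := by
        by_contra h
        push_neg at h
        nlinarith
      have key : ν n / Real.sqrt (lam n) - 1 = σ * t n / (Real.sqrt n * Real.sqrt (lam n)) := by
        simp only [ht_def]
        field_simp
      have hMA : -M ≤ t n := by
        have h1 : |A| ≤ M := le_max_left _ _
        have h2 : -|A| ≤ A := neg_abs_le A
        linarith [hb.1]
      have hMB : t n ≤ M := by
        have h1 : |B| ≤ M := le_max_right _ _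
        have h2 : B ≤ |B| := le_abs_self B
        linarith [hb.2]
      rw [key]
      have : -(σ * M / (Real.sqrt n * Real.sqrt (lam n))) = σ * (-M) / (Real.sqrt n * Real.sqrt (lam n)) := by ring
      rw [this]
      gcongr
    · filter_upwards [htbound, ha.eventually_gt_atTop 0] with n hb hapos
      simp only [ha_def] at hapos ⊢
      have hsl : 0 < Real.sqrt (lam n) := Real.sqrt_pos.2 (hlam n)
      have hsn : 0 < Real.sqrt (n : ℝ) := by
        by_contra h
        push_neg at h
        nlinarith
      have key : ν n / Real.sqrt (lam n) - 1 = σ * t n / (Real.sqrt n * Real.sqrt (lam n)) := by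
        simp only [ht_def]
        field_simp
      have hMA : -M ≤ t n := by
        have h1 : |A| ≤ M := le_max_left _ _
        have h2 : -|A| ≤ A := neg_abs_le A
        linarith [hb.1]
      have hMB : t n ≤ M := by
        have h1 : |B| ≤ M := le_max_right _ _
        have h2 : B ≤ |B| := le_abs_self B
        linarith [hb.2]
      rw [key]
      gcongr
  have := hdiff.add_const 1
  simpa using this
end

section
/- Fix an integer n ≥ 1, σ > 0, λ > 0 and θ ∈ ℝ, and let W be a random variable with law N(θ, σ²/n). Then E[ Φ(√n(W − √λ)/σ) + Φ(√n(−W − √λ)/σ) ] = Φ(√n(θ − √λ)/(√2·σ)) + Φ(−√n(θ + √λ)/(√2·σ)). That is, the expectation of the plug-in detection probability estimate P̂_d = Φ((W − √λ)/(σ/√n)) + Φ((−W − √λ)/(σ/√n)) equals Φ((θ − √λ)·√n/(√2σ)) + Φ(−(θ + √λ)·√n/(√2σ)). -/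
open MeasureTheory ProbabilityTheory

open Real


lemma Phi_nonneg (x : ℝ) : 0 ≤ Phi x := ENNReal.toReal_nonneg

lemma Phi_le_one (x : ℝ) : Phi x ≤ 1 := by
  unfold Phi
  have := prob_le_one (μ := gaussianReal 0 1) (s := Set.Iic x)
  exact ENNReal.toReal_le_of_le_ofReal one_pos.le (by simpa using this)

lemma measurable_Phi : Measurable Phi := by
  have : Monotone Phi := fun a b hab =>
    ENNReal.toReal_mono (measure_ne_top _ _) (measure_mono (Set.Iic_subset_Iic.mpr hab))
  exact this.measurable

lemma continuous_pdf01 : Continuous (gaussianPDFReal 0 1) := by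
  unfold gaussianPDFReal; fun_prop

lemma pdf01_le (x : ℝ) : gaussianPDFReal 0 1 x ≤ (√(2 * π))⁻¹ := by
  unfold gaussianPDFReal
  push_cast
  rw [mul_one]
  have h1 : rexp (-(x - 0)^2 / (2*1)) ≤ 1 := by
    rw [Real.exp_le_one_iff]; nlinarith [sq_nonneg (x - 0)]
  have h2 : (0:ℝ) ≤ (√(2 * π))⁻¹ := by positivity
  calc (√(2 * π))⁻¹ * rexp (-(x - 0)^2 / (2*1)) ≤ (√(2 * π))⁻¹ * 1 :=
        mul_le_mul_of_nonneg_left h1 h2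
    _ = (√(2 * π))⁻¹ := mul_one _

lemma conv_pdf (u : ℝ) :
    ∫ z, gaussianPDFReal 0 1 (u + z) * gaussianPDFReal 0 1 z = gaussianPDFReal 0 2 u := by
  have hpi : (0:ℝ) < π := Real.pi_pos
  have key : ∀ z : ℝ, gaussianPDFReal 0 1 (u + z) * gaussianPDFReal 0 1 z
      = ((√(2 * π))⁻¹ * (√(2 * π))⁻¹ * rexp (-u^2/4)) * rexp (-(z + u/2)^2) := by
    intro z
    unfold gaussianPDFReal
    push_cast
    rw [mul_mul_mul_comm, ← Real.exp_add]
    have he : rexp (-(u + z - 0)^2/(2*1) + -(z - 0)^2/(2*1))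
        = rexp (-u^2/4) * rexp (-(z + u/2)^2) := by
      rw [← Real.exp_add]; congr 1; ring
    rw [he, show (2:ℝ) * π * 1 = 2 * π by ring]
    ring
  simp_rw [key]
  rw [integral_const_mul]
  have h1 : ∫ z : ℝ, rexp (-(z + u/2)^2) = √π := by
    have := integral_add_right_eq_self (μ := volume) (fun z : ℝ => rexp (-z^2)) (u/2)
    calc ∫ z : ℝ, rexp (-(z + u/2)^2) = ∫ z : ℝ, rexp (-z^2) := this
      _ = √π := by simpa using integral_gaussian 1
  rw [h1]
  unfold gaussianPDFReal
  push_cast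
  have h2 : (√(2*π))⁻¹ * (√(2*π))⁻¹ = (2*π)⁻¹ := by
    rw [← mul_inv, Real.mul_self_sqrt (by positivity)]
  rw [h2]
  have h3 : √(2 * π * 2) = 2 * √π := by
    rw [show (2:ℝ) * π * 2 = 2^2 * π by ring, Real.sqrt_mul (by positivity),
      Real.sqrt_sq (by norm_num)]
  rw [h3]
  have h4 : (2*π)⁻¹ * √π = (2 * √π)⁻¹ := by
    have hm : (2 * √π) * ((2*π)⁻¹ * √π) = 1 := by
      field_simp
      nlinarith [Real.sq_sqrt hpi.le, Real.sqrt_nonneg π]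
    exact eq_inv_of_mul_eq_one_left (by linarith [hm])
  rw [mul_comm ((2*π)⁻¹) (rexp _), mul_assoc, h4]
  ring_nf

lemma conv_pdf_lint (u : ℝ) :
    ∫⁻ z, gaussianPDF 0 1 (u + z) * gaussianPDF 0 1 z = gaussianPDF 0 2 u := by
  have hmul : ∀ z : ℝ, gaussianPDF 0 1 (u + z) * gaussianPDF 0 1 z
      = ENNReal.ofReal (gaussianPDFReal 0 1 (u + z) * gaussianPDFReal 0 1 z) := by
    intro z
    rw [gaussianPDF, gaussianPDF, ← ENNReal.ofReal_mul (gaussianPDFReal_nonneg _ _ _)]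
  simp_rw [hmul]
  have hint : Integrable (fun z => gaussianPDFReal 0 1 (u + z) * gaussianPDFReal 0 1 z) := by
    apply Integrable.bdd_mul (integrable_gaussianPDFReal 0 1)
      ((continuous_pdf01.comp (continuous_const.add continuous_id)).aestronglyMeasurable)
    refine Filter.Eventually.of_forall (fun z => (?_ : _ ≤ (√(2 * π))⁻¹))
    simp only [Function.comp, id]
    rw [Real.norm_eq_abs, abs_of_nonneg (gaussianPDFReal_nonneg _ _ _)]
    exact pdf01_le _
  rw [← ofReal_integral_eq_lintegral_ofReal hint
    (Filter.Eventually.of_forall fun z =>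
      mul_nonneg (gaussianPDFReal_nonneg _ _ _) (gaussianPDFReal_nonneg _ _ _)),
    conv_pdf, gaussianPDF]

lemma ofReal_Phi (y : ℝ) : ENNReal.ofReal (Phi y) = gaussianReal 0 1 (Set.Iic y) := by
  unfold Phi
  exact ENNReal.ofReal_toReal (measure_ne_top _ _)

lemma gaussianReal_two_Iic (c : ℝ) :
    gaussianReal 0 2 (Set.Iic c) = gaussianReal 0 1 (Set.Iic (c / √2)) := by
  have h2 : (0:ℝ) < √2 := Real.sqrt_pos.mpr two_pos
  have hmap := gaussianReal_map_const_mul (μ := 0) (v := 1) (√2)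
  have hv : (NNReal.mk ((√2)^2) (sq_nonneg _) * 1 : NNReal) = 2 := by
    ext
    simp [Real.sq_sqrt (by norm_num : (0:ℝ) ≤ 2)]
  rw [hv, mul_zero] at hmap
  rw [← hmap, Measure.map_apply (measurable_const_mul _) measurableSet_Iic]
  congr 1
  ext x
  simp only [Set.mem_preimage, Set.mem_Iic]
  rw [le_div_iff₀ h2, mul_comm]

lemma integral_Phi_add (c : ℝ) :
    ∫ z, Phi (z + c) ∂(gaussianReal 0 1) = Phi (c / √2) := by
  set g := gaussianPDF 0 1 with hg
  have hgm : Measurable g := measurable_gaussianPDF 0 1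
  have hden : gaussianReal 0 1 = volume.withDensity g :=
    gaussianReal_of_var_ne_zero 0 one_ne_zero
  have hm : Measurable fun z : ℝ => Phi (z + c) := measurable_Phi.comp (measurable_add_const c)
  rw [integral_eq_lintegral_of_nonneg_ae
    (Filter.Eventually.of_forall fun z => Phi_nonneg _) hm.aestronglyMeasurable]
  have hm2 : Measurable fun z : ℝ => ENNReal.ofReal (Phi (z + c)) :=
    ENNReal.measurable_ofReal.comp hm
  have main : ∫⁻ z, ENNReal.ofReal (Phi (z + c)) ∂(gaussianReal 0 1)
      = gaussianReal 0 2 (Set.Iic c) := by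
    rw [hden, lintegral_withDensity_eq_lintegral_mul volume hgm
      hm2]
    simp only [Pi.mul_apply]
    have h1 : ∀ z : ℝ, ENNReal.ofReal (Phi (z + c))
        = ∫⁻ t, (Set.Iic c).indicator (fun t => g (t + z)) t := by
      intro z
      rw [ofReal_Phi, hden, withDensity_apply _ measurableSet_Iic,
        ← lintegral_indicator measurableSet_Iic _,
        ← lintegral_add_right_eq_self (fun t => (Set.Iic (z + c)).indicator g t) z]
      congr 1
      ext t
      simp only [Set.indicator_apply, Set.mem_Iic]
      have hiff : (t + z ≤ z + c) = (t ≤ c) :=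
        propext ⟨fun h => by linarith, fun h => by linarith⟩
      simp only [hiff]
    simp_rw [h1]
    have h2 : ∀ z : ℝ, g z * ∫⁻ t, (Set.Iic c).indicator (fun t => g (t + z)) t
        = ∫⁻ t, (Set.Iic c).indicator (fun t => g (t + z) * g z) t := by
      intro z
      have hmi : Measurable fun t : ℝ => g (t + z) := hgm.comp (measurable_add_const z)
      rw [← lintegral_const_mul (g z) (hmi.indicator measurableSet_Iic)]
      congr 1
      ext t
      by_cases ht : t ∈ Set.Iic c <;> simp [Set.indicator_apply, ht, mul_comm]
    simp_rw [h2]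
    have hswap := lintegral_lintegral_swap (μ := volume) (ν := volume)
      (f := fun z t => (Set.Iic c).indicator (fun t => g (t + z) * g z) t) ?_
    · rw [hswap]
      have h3 : ∀ t : ℝ, (∫⁻ z, (Set.Iic c).indicator (fun t' => g (t' + z) * g z) t)
          = (Set.Iic c).indicator (gaussianPDF 0 2) t := by
        intro t
        by_cases ht : t ∈ Set.Iic c
        · simp only [Set.indicator_of_mem ht]
          simpa [add_comm] using conv_pdf_lint t
        · simp [Set.indicator_of_notMem ht]
      simp_rw [h3]
      rw [lintegral_indicator measurableSet_Iic _, ← withDensity_apply _ measurableSet_Iic,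
        ← gaussianReal_of_var_ne_zero 0 two_ne_zero]
    · have : (Function.uncurry fun z t => (Set.Iic c).indicator (fun t => g (t + z) * g z) t)
          = fun p : ℝ × ℝ => Set.indicator {p : ℝ × ℝ | p.2 ≤ c}
              (fun p => g (p.2 + p.1) * g p.1) p := by
        ext p
        by_cases hp : p.2 ≤ c <;>
          simp [Function.uncurry, Set.indicator_apply, Set.mem_Iic, hp]
      rw [this]
      exact (Measurable.indicator
        ((hgm.comp (measurable_snd.add measurable_fst)).mul (hgm.comp measurable_fst))
        (measurableSet_le measurable_snd measurable_const)).aemeasurable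
  rw [main, gaussianReal_two_Iic]
  rfl


lemma neg_map_gaussian : Measure.map (fun z : ℝ => -z) (gaussianReal 0 1) = gaussianReal 0 1 := by
  have hmap := gaussianReal_map_const_mul (μ := 0) (v := 1) (-1 : ℝ)
  have hv : (NNReal.mk ((-1:ℝ)^2) (sq_nonneg _) * 1 : NNReal) = 1 := by ext; norm_num
  rw [hv, mul_zero] at hmap
  rw [← hmap]
  congr 1
  ext z
  ring

lemma integral_Phi_neg_add (c : ℝ) :
    ∫ z, Phi (-z + c) ∂(gaussianReal 0 1) = Phi (c / √2) := by
  have hf : AEStronglyMeasurable (fun y : ℝ => Phi (y + c))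
      (Measure.map (fun z : ℝ => -z) (gaussianReal 0 1)) := by
    rw [neg_map_gaussian]
    exact (measurable_Phi.comp (measurable_add_const c)).aestronglyMeasurable
  calc ∫ z, Phi (-z + c) ∂(gaussianReal 0 1)
      = ∫ y, Phi (y + c) ∂(Measure.map (fun z : ℝ => -z) (gaussianReal 0 1)) :=
        (integral_map measurable_neg.aemeasurable hf).symm
    _ = ∫ y, Phi (y + c) ∂(gaussianReal 0 1) := by rw [neg_map_gaussian]
    _ = Phi (c / √2) := integral_Phi_add c
/-- the expectation under W ~ N(θ, σ²/n) of the plug-in detection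
probability estimate Φ(√n(W − √λ)/σ) + Φ(√n(−W − √λ)/σ) equals
Φ(√n(θ − √λ)/(√2σ)) + Φ(−√n(θ + √λ)/(√2σ)). -/
theorem expectation_plugin_detection (n : ℕ) (hn : 1 ≤ n) (σ lam θ : ℝ)
    (hσ : 0 < σ) (hlam : 0 < lam) :
    ∫ x, (Phi (Real.sqrt n * (x - Real.sqrt lam) / σ) +
          Phi (Real.sqrt n * (-x - Real.sqrt lam) / σ))
        ∂(gaussianReal θ (Real.toNNReal (σ^2 / n)))
      = Phi (Real.sqrt n * (θ - Real.sqrt lam) / (Real.sqrt 2 * σ)) +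
        Phi (-(Real.sqrt n * (θ + Real.sqrt lam)) / (Real.sqrt 2 * σ)) := by
  have hn0 : (0:ℝ) < n := by exact_mod_cast hn
  have hsn : (0:ℝ) < √n := Real.sqrt_pos.mpr hn0
  have h2 : (0:ℝ) < √2 := Real.sqrt_pos.mpr two_pos
  set s : ℝ := σ / √n with hs
  have hs0 : 0 < s := div_pos hσ hsn
  -- the law as a pushforward of the standard gaussian
  have hmap : gaussianReal θ (Real.toNNReal (σ^2 / n))
      = Measure.map (fun z => s * z + θ) (gaussianReal 0 1) := by
    have h1 := gaussianReal_map_const_mul (μ := 0) (v := 1) s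
    have h2' := gaussianReal_map_add_const (μ := s * 0) (v := NNReal.mk (s^2) (sq_nonneg _) * 1) θ
    rw [← h1] at h2'
    rw [Measure.map_map (measurable_add_const θ) (measurable_const_mul s)] at h2'
    have hfun : ((· + θ) ∘ fun z : ℝ => s * z) = fun z => s * z + θ := rfl
    rw [hfun] at h2'
    have hvar : (NNReal.mk (s^2) (sq_nonneg _) * 1 : NNReal) = Real.toNNReal (σ^2 / n) := by
      ext
      rw [NNReal.coe_mul, NNReal.coe_one, mul_one,
        Real.coe_toNNReal _ (by positivity)]
      simp only [NNReal.coe_mk]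
      rw [hs, div_pow, Real.sq_sqrt hn0.le]
    rw [hvar, mul_zero, zero_add] at h2'
    exact h2'.symm
  have hmeas : Measurable fun x : ℝ =>
      Phi (√n * (x - √lam) / σ) + Phi (√n * (-x - √lam) / σ) := by
    apply Measurable.add <;> exact measurable_Phi.comp (by fun_prop)
  rw [hmap, integral_map (by fun_prop) hmeas.aestronglyMeasurable]
  set c₁ : ℝ := √n * (θ - √lam) / σ with hc₁
  set c₂ : ℝ := √n * (-θ - √lam) / σ with hc₂
  have harg1 : ∀ z : ℝ, √n * ((s * z + θ) - √lam) / σ = z + c₁ := by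
    intro z
    rw [hc₁, hs]
    field_simp
    ring
  have harg2 : ∀ z : ℝ, √n * (-(s * z + θ) - √lam) / σ = -z + c₂ := by
    intro z
    rw [hc₂, hs]
    field_simp
    ring
  simp only [harg1, harg2]
  have hint1 : Integrable (fun z : ℝ => Phi (z + c₁)) (gaussianReal 0 1) := by
    refine ⟨(measurable_Phi.comp (measurable_add_const c₁)).aestronglyMeasurable, ?_⟩
    apply HasFiniteIntegral.mono' (integrable_const (1:ℝ)).2
    refine Filter.Eventually.of_forall fun z => ?_
    rw [Real.norm_eq_abs, abs_of_nonneg (Phi_nonneg _)]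
    exact Phi_le_one _
  have hint2 : Integrable (fun z : ℝ => Phi (-z + c₂)) (gaussianReal 0 1) := by
    refine ⟨(measurable_Phi.comp ((measurable_neg).add_const c₂)).aestronglyMeasurable, ?_⟩
    apply HasFiniteIntegral.mono' (integrable_const (1:ℝ)).2
    refine Filter.Eventually.of_forall fun z => ?_
    rw [Real.norm_eq_abs, abs_of_nonneg (Phi_nonneg _)]
    exact Phi_le_one _
  rw [integral_add hint1 hint2, integral_Phi_add, integral_Phi_neg_add]
  congr 1
  · rw [hc₁]
    rw [div_div, mul_comm σ (√2)]
  · rw [hc₂]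
    rw [div_div, mul_comm σ (√2)]
    congr 1
    ring
end

section
/- (Monotonicity of CR_1.) Fix an integer n ≥ 1, σ > 0, α, τ ∈ (0,1) with τ ≥ α and τ < 2Φ(−z_{α/2}/2) − α, and λ > 0 with √λ > z_{α/2}σ/√n. Let c_1, c_2 > 0 be solutions of θ = √λ − z_{α/2}σ̃(θ)/√n and θ = √λ + z_{α/2}σ̃(θ)/√n, respectively. Then CR_1(θ) = CR_a(θ, √λ)/P_s(θ, √λ) is, as a function of θ > 0, non-decreasing on (0, c_1] and strictly increasing on [c_1, c_2]. -/
open MeasureTheory ProbabilityTheory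

/-- P_s(θ,ν) = Φ(√n(θ − ν)/σ) + Φ(√n(−θ − ν)/σ). -/
noncomputable def Ps (n : ℕ) (σ θ ν : ℝ) : ℝ :=
  Phi (Real.sqrt n * (θ - ν) / σ) + Phi (Real.sqrt n * (-θ - ν) / σ)

/-- σ̃(θ) = (1 + λ/θ²)⁻¹ σ for θ ≠ 0, with the convention σ̃(0) = 0. -/
noncomputable def sigTilde (lam σ θ : ℝ) : ℝ :=
  if θ = 0 then 0 else (1 + lam / θ ^ 2)⁻¹ * σ

open Classical in
/-- The piecewise function CR_a(θ,ν); here `za` denotes the quantile z_{α/2}. -/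
noncomputable def CRa (n : ℕ) (σ lam za θ ν : ℝ) : ℝ :=
  if θ < |ν - za * sigTilde lam σ θ / Real.sqrt n| then
    (Ps n σ θ ν - 2 * Phi (-(za * sigTilde lam σ θ / σ))) *
      (if ν < za * sigTilde lam σ θ / Real.sqrt n then 1 else 0)
  else if θ ≤ ν + za * sigTilde lam σ θ / Real.sqrt n then
    Phi (za * sigTilde lam σ θ / σ) - Phi (Real.sqrt n * (ν - θ) / σ)
  else 1 - 2 * Phi (-(za * sigTilde lam σ θ / σ))

open Classical in
/-- The piecewise function CR_b(θ,ν); here `za` denotes the quantile z_{α/2}. -/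
noncomputable def CRb (n : ℕ) (σ α za θ ν : ℝ) : ℝ :=
  if θ < |ν - za * σ / Real.sqrt n| then
    (Ps n σ θ ν - α) * (if ν < za * σ / Real.sqrt n then 1 else 0)
  else if θ ≤ ν + za * σ / Real.sqrt n then
    1 - α / 2 - Phi (Real.sqrt n * (ν - θ) / σ)
  else 1 - α

/-! ### Auxiliary lemmas about the standard normal CDF -/

noncomputable def phi' (x : ℝ) : ℝ := gaussianPDFReal 0 1 x

lemma phi'_pos (x : ℝ) : 0 < phi' x := gaussianPDFReal_pos 0 1 x one_ne_zero

lemma phi'_integrable : MeasureTheory.Integrable phi' := integrable_gaussianPDFReal 0 1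

lemma phi'_even (x : ℝ) : phi' (-x) = phi' x := by
  simp [phi', gaussianPDFReal]

lemma Phi_eq (x : ℝ) : Phi x = ∫ t in Set.Iic x, phi' t := by
  rw [Phi, gaussianReal_apply_eq_integral 0 one_ne_zero,
    ENNReal.toReal_ofReal]
  · rfl
  · exact MeasureTheory.setIntegral_nonneg measurableSet_Iic
      (fun t _ => (gaussianPDFReal_pos 0 1 t one_ne_zero).le)

lemma Phi_sub (a b : ℝ) : Phi b - Phi a = ∫ t in a..b, phi' t := by
  rw [Phi_eq, Phi_eq]
  exact intervalIntegral.integral_Iic_sub_Iic phi'_integrable.integrableOn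
    phi'_integrable.integrableOn

lemma Phi_strictMono : StrictMono Phi := by
  intro a b hab
  have h : 0 < ∫ t in a..b, phi' t :=
    intervalIntegral.intervalIntegral_pos_of_pos_on
      phi'_integrable.intervalIntegrable (fun x _ => phi'_pos x) hab
  rw [← Phi_sub] at h
  linarith

lemma Phi_add_neg (x : ℝ) : Phi x + Phi (-x) = 1 := by
  have h1 : Phi (-x) = ∫ t in Set.Ioi x, phi' t := by
    rw [Phi_eq]
    have := integral_comp_neg_Iic (-x) phi'
    simp only [neg_neg] at this
    rw [← this]
    exact MeasureTheory.setIntegral_congr_fun measurableSet_Iic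
      (fun t _ => (phi'_even t).symm)
  rw [Phi_eq, h1, intervalIntegral.integral_Iic_add_Ioi phi'_integrable.integrableOn
    phi'_integrable.integrableOn]
  exact integral_gaussianPDFReal_eq_one 0 one_ne_zero

lemma Phi_pos (x : ℝ) : 0 < Phi x := by
  have h := Phi_strictMono (show x - 1 < x by linarith)
  have h2 : 0 ≤ Phi (x - 1) := by
    rw [Phi_eq]
    exact MeasureTheory.setIntegral_nonneg measurableSet_Iic (fun t _ => (phi'_pos t).le)
  linarith

lemma Phi_lt_one (x : ℝ) : Phi x < 1 := by
  have := Phi_add_neg x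
  have := Phi_pos (-x)
  linarith

/-- Shifting an interval to the right (staying right of the center) decreases the
gaussian increment. -/
lemma Phi_shift_lt {a b c : ℝ} (hab : a < b) (hc : 0 < c) (ha : -(c/2) ≤ a) :
    Phi (b + c) - Phi (a + c) < Phi b - Phi a := by
  rw [Phi_sub, Phi_sub, ← intervalIntegral.integral_comp_add_right phi' c]
  have hlt : ∀ x ∈ Set.Ioo a b, 0 < phi' x - phi' (x + c) := by
    intro x hx
    have hx2 : x ^ 2 < (x + c) ^ 2 := by nlinarith [hx.1]
    have : phi' (x + c) < phi' x := by
      simp only [phi', gaussianPDFReal, sub_zero, NNReal.coe_one, mul_one]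
      apply mul_lt_mul_of_pos_left _ (by positivity)
      apply Real.exp_lt_exp.mpr
      rw [div_lt_div_iff_of_pos_right (by norm_num)]
      linarith
    linarith
  have hint : IntervalIntegrable (fun x => phi' x - phi' (x + c)) volume a b := by
    apply IntervalIntegrable.sub phi'_integrable.intervalIntegrable
    exact ((MeasureTheory.Integrable.comp_add_right phi'_integrable c)).intervalIntegrable
  have := intervalIntegral.intervalIntegral_pos_of_pos_on hint hlt hab
  rw [intervalIntegral.integral_sub phi'_integrable.intervalIntegrable
    ((MeasureTheory.Integrable.comp_add_right phi'_integrable c)).intervalIntegrable] at this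
  linarith

/-! ### Auxiliary lemmas about `sigTilde` -/

lemma sigTilde_eq {lam σ θ : ℝ} (hlam : 0 < lam) (hθ : θ ≠ 0) :
    sigTilde lam σ θ = σ * θ ^ 2 / (θ ^ 2 + lam) := by
  rw [sigTilde, if_neg hθ]
  have h2 : (0:ℝ) < θ ^ 2 := by positivity
  field_simp

lemma sigTilde_pos {lam σ θ : ℝ} (hlam : 0 < lam) (hσ : 0 < σ) (hθ : 0 < θ) :
    0 < sigTilde lam σ θ := by
  rw [sigTilde_eq hlam hθ.ne']
  positivity

lemma sigTilde_lt {lam σ θ : ℝ} (hlam : 0 < lam) (hσ : 0 < σ) (hθ : 0 < θ) :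
    sigTilde lam σ θ < σ := by
  rw [sigTilde_eq hlam hθ.ne', div_lt_iff₀ (by positivity)]
  nlinarith

lemma sigTilde_mono {lam σ θ₁ θ₂ : ℝ} (hlam : 0 < lam) (hσ : 0 < σ) (hθ₁ : 0 < θ₁)
    (h12 : θ₁ < θ₂) : sigTilde lam σ θ₁ < sigTilde lam σ θ₂ := by
  have hθ₂ : 0 < θ₂ := hθ₁.trans h12
  rw [sigTilde_eq hlam hθ₁.ne', sigTilde_eq hlam hθ₂.ne',
    div_lt_div_iff₀ (by positivity) (by positivity)]
  nlinarith [mul_pos (mul_pos hσ hlam) (show (0:ℝ) < θ₂^2 - θ₁^2 by nlinarith)]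

lemma key_alg {θ₁ θ₂ k s : ℝ} (h1 : 0 < θ₁) (h12 : θ₁ < θ₂) (hs : 0 < s) (hks : k < s) :
    k * (s ^ 2 * (θ₁ + θ₂)) < (θ₁ ^ 2 + s ^ 2) * (θ₂ ^ 2 + s ^ 2) := by
  nlinarith [mul_lt_mul_of_pos_right hks (mul_pos (pow_pos hs 2) (show (0:ℝ) < θ₁+θ₂ by linarith)),
    mul_nonneg (sq_nonneg s) (sq_nonneg (2*θ₁-s)), mul_nonneg (sq_nonneg s) (sq_nonneg (2*θ₂-s)),
    sq_nonneg (θ₁*θ₂)]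

/-- key monotonicity of θ - k·θ²/(θ²+λ) -/
lemma key_mono {θ₁ θ₂ k s : ℝ} (h1 : 0 < θ₁) (h12 : θ₁ < θ₂) (hs : 0 < s) (hks : k < s) :
    k * θ₂ ^ 2 / (θ₂ ^ 2 + s ^ 2) - k * θ₁ ^ 2 / (θ₁ ^ 2 + s ^ 2) < θ₂ - θ₁ := by
  have h2 : 0 < θ₂ := h1.trans h12
  have d1 : (0:ℝ) < θ₁ ^ 2 + s ^ 2 := by positivity
  have d2 : (0:ℝ) < θ₂ ^ 2 + s ^ 2 := by positivity
  rw [div_sub_div _ _ d2.ne' d1.ne', div_lt_iff₀ (by positivity)]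
  have hk := key_alg h1 h12 hs hks
  have := mul_lt_mul_of_pos_left hk (show (0:ℝ) < θ₂ - θ₁ by linarith)
  nlinarith [this]

/-- Monotonicity of CR₁: θ ↦ CR_a(θ, √λ)/P_s(θ, √λ) is
non-decreasing on (0, c₁] and strictly increasing on [c₁, c₂]. -/
theorem CR1_monotone (n : ℕ) (hn : 1 ≤ n) (σ lam α τ za zt : ℝ)
    (hσ : 0 < σ) (hlam : 0 < lam)
    (hα : α ∈ Set.Ioo (0:ℝ) 1) (hτ : τ ∈ Set.Ioo (0:ℝ) 1)
    (hza : Phi (-za) = α / 2) (hzt : Phi (-zt) = τ / 2)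
    (hC1 : α ≤ τ) (hC2 : τ < 2 * Phi (-(za / 2)) - α)
    (hlamLB : za * σ / Real.sqrt n < Real.sqrt lam)
    (c₁ c₂ : ℝ) (hc₁pos : 0 < c₁) (hc₂pos : 0 < c₂)
    (hc₁ : c₁ = Real.sqrt lam - za * sigTilde lam σ c₁ / Real.sqrt n)
    (hc₂ : c₂ = Real.sqrt lam + za * sigTilde lam σ c₂ / Real.sqrt n) :
    MonotoneOn (fun θ : ℝ => CRa n σ lam za θ (Real.sqrt lam)
        / Ps n σ θ (Real.sqrt lam)) (Set.Ioc 0 c₁) ∧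
    StrictMonoOn (fun θ : ℝ => CRa n σ lam za θ (Real.sqrt lam)
        / Ps n σ θ (Real.sqrt lam)) (Set.Icc c₁ c₂) := by
  have hn0 : (0:ℝ) < (n:ℝ) := by exact_mod_cast hn
  have hsn : 0 < Real.sqrt n := Real.sqrt_pos.mpr hn0
  set ν := Real.sqrt lam with hν_def
  have hν : 0 < ν := Real.sqrt_pos.mpr hlam
  have hsq : ν ^ 2 = lam := Real.sq_sqrt hlam.le
  have hza0 : 0 < za := by
    by_contra h
    push_neg at h
    have h1 : Phi 0 ≤ Phi (-za) := Phi_strictMono.monotone (by linarith)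
    have h2 := Phi_add_neg 0
    rw [neg_zero] at h2
    rw [hza] at h1
    linarith [hα.2]
  have hwpos : ∀ θ : ℝ, 0 < θ → 0 < za * sigTilde lam σ θ / Real.sqrt n := by
    intro θ hθ
    have := sigTilde_pos hlam hσ hθ
    positivity
  have hwlt : ∀ θ : ℝ, 0 < θ → za * sigTilde lam σ θ / Real.sqrt n < ν := by
    intro θ hθ
    have h1 : za * sigTilde lam σ θ / Real.sqrt n < za * σ / Real.sqrt n :=
      (div_lt_div_iff_of_pos_right hsn).mpr (mul_lt_mul_of_pos_left (sigTilde_lt hlam hσ hθ) hza0)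
    exact h1.trans hlamLB
  have hwmono : ∀ θ₁ θ₂ : ℝ, 0 < θ₁ → θ₁ < θ₂ →
      za * sigTilde lam σ θ₁ / Real.sqrt n < za * sigTilde lam σ θ₂ / Real.sqrt n :=
    fun θ₁ θ₂ h1 h12 => (div_lt_div_iff_of_pos_right hsn).mpr
      (mul_lt_mul_of_pos_left (sigTilde_mono hlam hσ h1 h12) hza0)
  have hhmono : ∀ θ₁ θ₂ : ℝ, 0 < θ₁ → θ₁ < θ₂ →
      za * sigTilde lam σ θ₂ / Real.sqrt n - za * sigTilde lam σ θ₁ / Real.sqrt n < θ₂ - θ₁ := by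
    intro θ₁ θ₂ h1 h12
    have h2 := h1.trans h12
    have e : ∀ θ : ℝ, 0 < θ → za * sigTilde lam σ θ / Real.sqrt n
        = za * σ / Real.sqrt n * θ ^ 2 / (θ ^ 2 + ν ^ 2) := by
      intro θ hθ
      rw [sigTilde_eq hlam hθ.ne', hsq]
      have hne : (0:ℝ) < θ ^ 2 + lam := by positivity
      field_simp
    rw [e θ₁ h1, e θ₂ h2]
    exact key_mono h1 h12 hν hlamLB
  -- CRa vanishes on (0, c₁]
  have hCR0 : ∀ θ ∈ Set.Ioc (0:ℝ) c₁, CRa n σ lam za θ ν = 0 := by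
    rintro θ ⟨hθ0, hθc⟩
    rcases eq_or_lt_of_le hθc with rfl | hlt
    · -- θ = c₁ (c₁ substituted by θ)
      have harg : Real.sqrt n * (ν - θ) / σ = za * sigTilde lam σ θ / σ := by
        have hq : ν - θ = za * sigTilde lam σ θ / Real.sqrt n := by linarith [hc₁]
        rw [hq]
        field_simp
      have hcond1 : ¬ θ < |ν - za * sigTilde lam σ θ / Real.sqrt n| := by
        have hq : ν - za * sigTilde lam σ θ / Real.sqrt n = θ := by linarith [hc₁]
        rw [hq, abs_of_pos hθ0]
        exact lt_irrefl θ
      have hcond2 : θ ≤ ν + za * sigTilde lam σ θ / Real.sqrt n := by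
        have := hwpos θ hθ0
        linarith [hc₁]
      rw [CRa, if_neg hcond1, if_pos hcond2, harg, sub_self]
    · have hg : θ + za * sigTilde lam σ θ / Real.sqrt n < ν := by
        have h1 := hwmono θ c₁ hθ0 hlt
        linarith [hc₁]
      have hcond1 : θ < |ν - za * sigTilde lam σ θ / Real.sqrt n| := by
        rw [abs_of_pos (show 0 < ν - za * sigTilde lam σ θ / Real.sqrt n by
          linarith [hwpos θ hθ0])]
        linarith
      have hcond2 : ¬ ν < za * sigTilde lam σ θ / Real.sqrt n := not_lt.mpr (hwlt θ hθ0).le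
      rw [CRa, if_pos hcond1, if_neg hcond2, mul_zero]
  -- CRa on [c₁, c₂]
  have hCRmid : ∀ θ ∈ Set.Icc c₁ c₂, CRa n σ lam za θ ν
      = Phi (za * sigTilde lam σ θ / σ) - Phi (Real.sqrt n * (ν - θ) / σ) := by
    rintro θ ⟨hl, hr⟩
    have hθ0 : 0 < θ := lt_of_lt_of_le hc₁pos hl
    have h1 : ν - za * sigTilde lam σ θ / Real.sqrt n ≤ θ := by
      rcases eq_or_lt_of_le hl with rfl | h
      · linarith [hc₁]
      · have := hwmono c₁ θ hc₁pos h
        linarith [hc₁]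
    have h2 : θ ≤ ν + za * sigTilde lam σ θ / Real.sqrt n := by
      rcases eq_or_lt_of_le hr with rfl | h
      · linarith [hc₂]
      · have := hhmono θ c₂ hθ0 h
        linarith [hc₂]
    have hcond1 : ¬ θ < |ν - za * sigTilde lam σ θ / Real.sqrt n| := by
      rw [abs_of_pos (show 0 < ν - za * sigTilde lam σ θ / Real.sqrt n by
        linarith [hwlt θ hθ0])]
      exact not_lt.mpr h1
    rw [CRa, if_neg hcond1, if_pos h2]
  constructor
  · intro a ha b hb _
    dsimp only
    rw [hCR0 a ha, hCR0 b hb, zero_div, zero_div]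
  · intro θ₁ h₁ θ₂ h₂ h12
    have hθ₁0 : 0 < θ₁ := lt_of_lt_of_le hc₁pos h₁.1
    have hθ₂0 : 0 < θ₂ := hθ₁0.trans h12
    have hform : ∀ θ ∈ Set.Icc c₁ c₂,
        CRa n σ lam za θ ν / Ps n σ θ ν
          = 1 - (Phi (-(za * sigTilde lam σ θ / σ)) + Phi (-(Real.sqrt n * (θ + ν) / σ)))
              / (Phi (Real.sqrt n * (θ - ν) / σ) + Phi (-(Real.sqrt n * (θ + ν) / σ))) := by
      intro θ hθ
      rw [hCRmid θ hθ, Ps]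
      have e1 : Real.sqrt n * (-θ - ν) / σ = -(Real.sqrt n * (θ + ν) / σ) := by ring
      have e2 : Real.sqrt n * (ν - θ) / σ = -(Real.sqrt n * (θ - ν) / σ) := by ring
      rw [e1, e2]
      have hA := Phi_add_neg (za * sigTilde lam σ θ / σ)
      have hB := Phi_add_neg (Real.sqrt n * (θ - ν) / σ)
      have hBpos := Phi_pos (Real.sqrt n * (θ - ν) / σ)
      have hCpos := Phi_pos (-(Real.sqrt n * (θ + ν) / σ))
      have hD : (0:ℝ) < Phi (Real.sqrt n * (θ - ν) / σ) + Phi (-(Real.sqrt n * (θ + ν) / σ)) := by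
        linarith
      rw [div_eq_iff hD.ne', sub_mul, one_mul, div_mul_cancel₀ _ hD.ne']
      linarith
    dsimp only
    rw [hform θ₁ h₁, hform θ₂ h₂]
    have hs12 : za * sigTilde lam σ θ₁ / σ < za * sigTilde lam σ θ₂ / σ :=
      (div_lt_div_iff_of_pos_right hσ).mpr (mul_lt_mul_of_pos_left (sigTilde_mono hlam hσ hθ₁0 h12) hza0)
    have hv12 : Real.sqrt n * (θ₁ + ν) / σ < Real.sqrt n * (θ₂ + ν) / σ :=
      (div_lt_div_iff_of_pos_right hσ).mpr (by nlinarith)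
    have hu12 : Real.sqrt n * (θ₁ - ν) / σ < Real.sqrt n * (θ₂ - ν) / σ :=
      (div_lt_div_iff_of_pos_right hσ).mpr (by nlinarith)
    have hM : Phi (-(za * sigTilde lam σ θ₂ / σ)) + Phi (-(Real.sqrt n * (θ₂ + ν) / σ))
        < Phi (-(za * sigTilde lam σ θ₁ / σ)) + Phi (-(Real.sqrt n * (θ₁ + ν) / σ)) :=
      add_lt_add (Phi_strictMono (neg_lt_neg hs12)) (Phi_strictMono (neg_lt_neg hv12))
    have hshift := Phi_shift_lt hu12 (c := 2 * Real.sqrt n * ν / σ)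
      (by positivity)
      (by
        rw [show -(2 * Real.sqrt n * ν / σ / 2) = Real.sqrt n * (-ν) / σ by ring]
        exact (div_le_div_iff_of_pos_right hσ).mpr (by nlinarith))
    rw [show Real.sqrt n * (θ₂ - ν) / σ + 2 * Real.sqrt n * ν / σ
          = Real.sqrt n * (θ₂ + ν) / σ by ring,
        show Real.sqrt n * (θ₁ - ν) / σ + 2 * Real.sqrt n * ν / σ
          = Real.sqrt n * (θ₁ + ν) / σ by ring] at hshift
    have hv₁ := Phi_add_neg (Real.sqrt n * (θ₁ + ν) / σ)
    have hv₂ := Phi_add_neg (Real.sqrt n * (θ₂ + ν) / σ)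
    have hD12 : Phi (Real.sqrt n * (θ₁ - ν) / σ) + Phi (-(Real.sqrt n * (θ₁ + ν) / σ))
        < Phi (Real.sqrt n * (θ₂ - ν) / σ) + Phi (-(Real.sqrt n * (θ₂ + ν) / σ)) := by
      linarith
    have hD₁pos : (0:ℝ) < Phi (Real.sqrt n * (θ₁ - ν) / σ)
        + Phi (-(Real.sqrt n * (θ₁ + ν) / σ)) := by
      linarith [Phi_pos (Real.sqrt n * (θ₁ - ν) / σ), Phi_pos (-(Real.sqrt n * (θ₁ + ν) / σ))]
    have hM₂pos : (0:ℝ) < Phi (-(za * sigTilde lam σ θ₂ / σ))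
        + Phi (-(Real.sqrt n * (θ₂ + ν) / σ)) := by
      linarith [Phi_pos (-(za * sigTilde lam σ θ₂ / σ)), Phi_pos (-(Real.sqrt n * (θ₂ + ν) / σ))]
    have hMD :
        (Phi (-(za * sigTilde lam σ θ₂ / σ)) + Phi (-(Real.sqrt n * (θ₂ + ν) / σ)))
          / (Phi (Real.sqrt n * (θ₂ - ν) / σ) + Phi (-(Real.sqrt n * (θ₂ + ν) / σ)))
        < (Phi (-(za * sigTilde lam σ θ₁ / σ)) + Phi (-(Real.sqrt n * (θ₁ + ν) / σ)))
          / (Phi (Real.sqrt n * (θ₁ - ν) / σ) + Phi (-(Real.sqrt n * (θ₁ + ν) / σ))) := by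
      calc (Phi (-(za * sigTilde lam σ θ₂ / σ)) + Phi (-(Real.sqrt n * (θ₂ + ν) / σ)))
          / (Phi (Real.sqrt n * (θ₂ - ν) / σ) + Phi (-(Real.sqrt n * (θ₂ + ν) / σ)))
          < (Phi (-(za * sigTilde lam σ θ₂ / σ)) + Phi (-(Real.sqrt n * (θ₂ + ν) / σ)))
          / (Phi (Real.sqrt n * (θ₁ - ν) / σ) + Phi (-(Real.sqrt n * (θ₁ + ν) / σ))) :=
            div_lt_div_of_pos_left hM₂pos hD₁pos hD12
        _ ≤ _ := (div_le_div_iff_of_pos_right hD₁pos).mpr hM.le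
    linarith
end
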